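/- Under the Aligned-MTL update with step size α ≤ 1/Λ: if the singular values of the gradient matrix G(θ_t) satisfy σ_R/σ₁ > C and the projections satisfy ‖V w‖ > ε (with w the task weights), then L₀(θ_t) - L₀(θ_{t+1}) > (α ε² C² / (2‖w‖²)) ‖g₀(θ_t)‖², where g₀ = G w = ∇L₀(θ_t). -/

import Mathlib

open Matrix

-- Descent lemma
lemma descent_lemma {E : Type*} [NormedAddCommGroup E] [InnerProductSpace ℝ E] [CompleteSpace E]
    {f : E → ℝ} {g : E → E} {K : ℝ} (hK : 0 ≤ K)
    (hdiff : ∀ x, HasGradientAt f (g x) x)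
    (hlip : LipschitzWith (Real.toNNReal K) g) (x v : E) :
    f (x + v) ≤ f x + inner ℝ (g x) v + K / 2 * ‖v‖ ^ 2 := by
  set h : ℝ → ℝ := fun t => f (x + t • v) - t * inner ℝ (g x) v - K / 2 * ‖v‖ ^ 2 * t ^ 2 with hh
  have hder : ∀ t : ℝ, HasDerivAt h
      ((inner ℝ (g (x + t • v)) v : ℝ) - inner ℝ (g x) v - K * ‖v‖ ^ 2 * t) t := by
    intro t
    have hc : HasDerivAt (fun t : ℝ => x + t • v) v t := by
      simpa using ((hasDerivAt_id t).smul_const v).const_add x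
    have hf : HasDerivAt (fun t : ℝ => f (x + t • v))
        ((inner ℝ (g (x + t • v)) v : ℝ)) t := by
      have := ((hdiff (x + t • v)).hasFDerivAt).comp_hasDerivAt t hc
      exact this
    have h2 : HasDerivAt (fun t : ℝ => t * (inner ℝ (g x) v : ℝ)) (inner ℝ (g x) v) t := by
      simpa using (hasDerivAt_id t).mul_const (inner ℝ (g x) v : ℝ)
    have h3 : HasDerivAt (fun t : ℝ => K / 2 * ‖v‖ ^ 2 * t ^ 2) (K * ‖v‖ ^ 2 * t) t := by
      have := (hasDerivAt_pow 2 t).const_mul (K / 2 * ‖v‖ ^ 2)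
      refine this.congr_deriv ?_
      rw [show (2:ℕ) - 1 = 1 from rfl]; push_cast; ring
    exact (hf.sub h2).sub h3
  have hmono : AntitoneOn h (Set.Icc 0 1) := by
    apply antitoneOn_of_deriv_nonpos (convex_Icc 0 1)
    · exact fun t _ => (hder t).continuousAt.continuousWithinAt
    · intro t ht
      exact (hder t).differentiableAt.differentiableWithinAt
    · intro t ht
      rw [interior_Icc] at ht
      rw [(hder t).deriv]
      have hb : (inner ℝ (g (x + t • v)) v : ℝ) - inner ℝ (g x) v ≤ K * ‖v‖ ^ 2 * t := by
        have h1 : (inner ℝ (g (x + t • v)) v : ℝ) - inner ℝ (g x) v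
            = inner ℝ (g (x + t • v) - g x) v := by rw [inner_sub_left]
        rw [h1]
        calc (inner ℝ (g (x + t • v) - g x) v : ℝ) ≤ ‖g (x + t • v) - g x‖ * ‖v‖ :=
              real_inner_le_norm _ _
          _ ≤ K * ‖t • v‖ * ‖v‖ := by
              have := hlip.dist_le_mul (x + t • v) x
              rw [dist_eq_norm, dist_eq_norm] at this
              have h2 : x + t • v - x = t • v := by abel
              rw [h2] at this
              have hK' : (Real.toNNReal K : ℝ) = K := Real.coe_toNNReal K hK
              refine mul_le_mul_of_nonneg_right ?_ (norm_nonneg v)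
              rw [← hK']; exact this
          _ = K * ‖v‖ ^ 2 * t := by
              rw [norm_smul, Real.norm_eq_abs, abs_of_pos ht.1]; ring
      linarith
  have := hmono (Set.left_mem_Icc.2 zero_le_one) (Set.right_mem_Icc.2 zero_le_one) zero_le_one
  simp only [hh] at this
  simp only [zero_smul, add_zero, one_smul, zero_mul, mul_zero, sub_zero, one_pow, mul_one,
    zero_pow] at this
  linarith

lemma dot_ortho {k l : Type*} [Fintype k] [Fintype l] [DecidableEq l] (U : Matrix k l ℝ)
    (hU : Uᵀ * U = 1) (y z : l → ℝ) : (U *ᵥ y) ⬝ᵥ (U *ᵥ z) = y ⬝ᵥ z := by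
  rw [dotProduct_mulVec, ← Matrix.mulVec_transpose, mulVec_mulVec, hU, one_mulVec]

theorem stmt_11 (m T : ℕ) (hT : 0 < T)
    (L : Fin T → EuclideanSpace ℝ (Fin m) → ℝ)
    (gradL : Fin T → EuclideanSpace ℝ (Fin m) → EuclideanSpace ℝ (Fin m))
    (Λ : ℝ) (hΛ : 0 < Λ)
    (hbdd : ∀ i, ∃ M, ∀ θ, M ≤ L i θ)
    (hdiff : ∀ i θ, HasGradientAt (L i) (gradL i θ) θ)
    (hlip : ∀ i, LipschitzWith (Real.toNNReal Λ) (gradL i))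
    (w : Fin T → ℝ) (hw : w ≠ 0)
    (L0 : EuclideanSpace ℝ (Fin m) → ℝ) (hL0 : L0 = fun θ => ∑ i, w i * L i θ)
    (gradL0 : EuclideanSpace ℝ (Fin m) → EuclideanSpace ℝ (Fin m))
    (hdiff0 : ∀ θ, HasGradientAt L0 (gradL0 θ) θ)
    (hlip0 : LipschitzWith (Real.toNNReal Λ) gradL0)
    (θt : EuclideanSpace ℝ (Fin m))
    (G : Matrix (Fin m) (Fin T) ℝ) (hGdef : ∀ j i, G j i = gradL i θt j)
    (U : Matrix (Fin m) (Fin T) ℝ) (V : Matrix (Fin T) (Fin T) ℝ)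
    (σ : Fin T → ℝ) (hσ : ∀ i, 0 < σ i)
    (σ₁ σR : ℝ)
    (hσ₁ : ∀ r, σ r ≤ σ₁) (hσ₁mem : ∃ r, σ r = σ₁)
    (hσR : ∀ r, σR ≤ σ r) (hσRmem : ∃ r, σ r = σR) (hσRpos : 0 < σR)
    (hU : Uᵀ * U = 1) (hV : Vᵀ * V = 1) (hV' : V * Vᵀ = 1)
    (hSVD : G = U * Matrix.diagonal σ * Vᵀ)
    (C ε : ℝ) (hC0 : 0 < C) (hε0 : 0 < ε)
    (hC : C < σR / σ₁)
    (hε : ε < Real.sqrt (∑ j, V.mulVec w j ^ 2))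
    (G2 : Matrix (Fin m) (Fin T) ℝ) (hG2 : G2 = σR • (U * Vᵀ))
    (α : ℝ) (hα0 : 0 < α) (hα : α ≤ 1 / Λ)
    (θnext : EuclideanSpace ℝ (Fin m))
    (hupd : θnext = θt - α • (WithLp.equiv 2 (Fin m → ℝ)).symm (G2.mulVec w)) :
    L0 θt - L0 θnext
      > (α * ε ^ 2 * C ^ 2 / (2 * ∑ j, w j ^ 2)) * ∑ j, G.mulVec w j ^ 2 := by
  classical
  set W : ℝ := ∑ j, w j ^ 2 with hW
  have hWpos : 0 < W := by
    have : ∃ j, w j ≠ 0 := by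
      by_contra h
      push_neg at h
      exact hw (funext h)
    obtain ⟨j, hj⟩ := this
    exact Finset.sum_pos' (fun i _ => sq_nonneg _) ⟨j, Finset.mem_univ j, by positivity⟩
  -- singular value positivity
  have hσ₁pos : 0 < σ₁ := lt_of_lt_of_le hσRpos (hσRmem.elim (fun r hr => hr ▸ hσ₁ r))
  have hCσ : C * σ₁ < σR := (lt_div_iff₀ hσ₁pos).mp hC
  set x : Fin T → ℝ := Vᵀ *ᵥ w with hx
  -- dot product identities
  have hxx : x ⬝ᵥ x = W := by
    have := dot_ortho Vᵀ (by rw [transpose_transpose, hV']) w w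
    rw [this]
    simp [dotProduct, hW, pow_two]
  have hVw : (∑ j, V.mulVec w j ^ 2) = W := by
    have := dot_ortho V hV w w
    simp only [dotProduct, pow_two] at this ⊢
    rw [this]
    simp [hW, pow_two]
  have hε2 : ε ^ 2 < W := by
    have h1 : ε < Real.sqrt W := by rwa [hVw] at hε
    have h2 : ε ^ 2 < Real.sqrt W ^ 2 := by
      apply pow_lt_pow_left₀ h1 hε0.le
      norm_num
    rwa [Real.sq_sqrt hWpos.le] at h2
  -- G w = U (D x), G2 w = σR • (U x)
  have hdiag : Matrix.diagonal σ *ᵥ x = fun i => σ i * x i := by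
    ext i; rw [mulVec_diagonal]
  have hGw : G *ᵥ w = U *ᵥ (fun i => σ i * x i) := by
    rw [hSVD, ← mulVec_mulVec, ← mulVec_mulVec, ← hx, hdiag]
  have hG2w : G2 *ᵥ w = σR • (U *ᵥ x) := by
    rw [hG2, smul_mulVec, ← mulVec_mulVec]
  have hd1 : (G *ᵥ w) ⬝ᵥ (G *ᵥ w) = ∑ i, σ i ^ 2 * x i ^ 2 := by
    rw [hGw, dot_ortho U hU]
    simp [dotProduct]
    congr 1; ext i; ring
  have hd2 : (G *ᵥ w) ⬝ᵥ (G2 *ᵥ w) = σR * ∑ i, σ i * x i ^ 2 := by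
    rw [hGw, hG2w, dotProduct_smul, dot_ortho U hU]
    simp [dotProduct, Finset.mul_sum]
    congr 1; ext i; ring
  have hd3 : (G2 *ᵥ w) ⬝ᵥ (G2 *ᵥ w) = σR ^ 2 * W := by
    rw [hG2w, smul_dotProduct, dotProduct_smul, dot_ortho U hU, hxx, smul_eq_mul, smul_eq_mul]
    ring
  have hsum1 : (∑ i, σ i ^ 2 * x i ^ 2) ≤ σ₁ ^ 2 * W := by
    have hxW : ∑ i, x i ^ 2 = W := by
      simpa [dotProduct, pow_two] using hxx
    rw [← hxW, Finset.mul_sum]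
    apply Finset.sum_le_sum
    intro i _
    have h1 : σ i ^ 2 ≤ σ₁ ^ 2 := pow_le_pow_left₀ (hσ i).le (hσ₁ i) 2
    exact mul_le_mul_of_nonneg_right h1 (sq_nonneg (x i))
  have hxW : ∑ i, x i ^ 2 = W := by
    simpa [dotProduct, pow_two] using hxx
  have hsum2 : σR ^ 2 * W ≤ σR * ∑ i, σ i * x i ^ 2 := by
    calc σR ^ 2 * W = ∑ i, σR ^ 2 * x i ^ 2 := by rw [← hxW, Finset.mul_sum]
      _ ≤ ∑ i, σR * (σ i * x i ^ 2) := by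
          apply Finset.sum_le_sum
          intro i _
          have h1 : σR ^ 2 ≤ σR * σ i := by
            have := mul_le_mul_of_nonneg_left (hσR i) hσRpos.le
            calc σR ^ 2 = σR * σR := sq σR ▸ rfl
              _ ≤ σR * σ i := this
          calc σR ^ 2 * x i ^ 2 ≤ σR * σ i * x i ^ 2 :=
                mul_le_mul_of_nonneg_right h1 (sq_nonneg (x i))
            _ = σR * (σ i * x i ^ 2) := by ring
      _ = σR * ∑ i, σ i * x i ^ 2 := by rw [Finset.mul_sum]
  -- gradient of L0 at θt is G w
  have hgrad : gradL0 θt = (WithLp.equiv 2 (Fin m → ℝ)).symm (G *ᵥ w) := by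
    have hF : HasFDerivAt L0
        (∑ i, w i • (InnerProductSpace.toDual ℝ (EuclideanSpace ℝ (Fin m)) (gradL i θt))) θt := by
      rw [hL0]
      apply HasFDerivAt.fun_sum
      intro i _
      simpa [smul_smul] using ((hdiff i θt).hasFDerivAt).const_mul (w i)
    have heq : (∑ i, w i • (InnerProductSpace.toDual ℝ (EuclideanSpace ℝ (Fin m)) (gradL i θt)))
        = InnerProductSpace.toDual ℝ (EuclideanSpace ℝ (Fin m)) (∑ i, w i • gradL i θt) := by
      rw [map_sum]
      congr 1
      ext i : 1
      exact (_root_.map_smul _ _ _).symm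
    rw [heq] at hF
    have hg : HasGradientAt L0 (∑ i, w i • gradL i θt) θt :=
      hasGradientAt_iff_hasFDerivAt.mpr hF
    have huniq : gradL0 θt = ∑ i, w i • gradL i θt := (hdiff0 θt).unique hg
    rw [huniq]
    ext j
    have hL : (∑ i, w i • gradL i θt) j = ∑ i, w i * gradL i θt j := by
      induction' (Finset.univ : Finset (Fin T)) using Finset.induction with a s ha ih
      · simp
      · rw [Finset.sum_insert ha, Finset.sum_insert ha, ← ih]
        rfl
    rw [hL]
    show _ = (G *ᵥ w) j
    simp only [mulVec, dotProduct, hGdef]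
    congr 1
    ext i
    ring
  -- descent
  set d : EuclideanSpace ℝ (Fin m) := (WithLp.equiv 2 (Fin m → ℝ)).symm (G2.mulVec w) with hd
  have hinner_gd : (inner ℝ (gradL0 θt) d : ℝ) = (G *ᵥ w) ⬝ᵥ (G2 *ᵥ w) := by
    rw [hgrad]
    simp [PiLp.inner_apply, RCLike.inner_apply, dotProduct, hd]
    exact Finset.sum_congr rfl (fun i _ => mul_comm _ _)
  have hnormd : ‖d‖ ^ 2 = (G2 *ᵥ w) ⬝ᵥ (G2 *ᵥ w) := by
    rw [← real_inner_self_eq_norm_sq]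
    simp [PiLp.inner_apply, RCLike.inner_apply, dotProduct, hd]
    rw [EuclideanSpace.norm_sq_eq]; simp [Real.norm_eq_abs, sq_abs, pow_two]
  have hdesc := descent_lemma hΛ.le hdiff0 hlip0 θt (-(α • d))
  rw [show θt + -(α • d) = θnext by rw [hupd]; abel] at hdesc
  rw [inner_neg_right, inner_smul_right, norm_neg, norm_smul] at hdesc
  have hαΛ : α * Λ ≤ 1 := by
    rw [le_div_iff₀ hΛ] at hα; linarith
  have key : L0 θt - L0 θnext ≥ α / 2 * (σR ^ 2 * W) := by
    have hnd2 : (‖α‖ * ‖d‖) ^ 2 = α ^ 2 * (σR ^ 2 * W) := by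
      rw [mul_pow, hnormd, hd3, Real.norm_eq_abs, sq_abs]
    rw [hinner_gd, hnd2] at hdesc
    have hdot2 : σR ^ 2 * W ≤ (G *ᵥ w) ⬝ᵥ (G2 *ᵥ w) := by rw [hd2]; exact hsum2
    set S : ℝ := σR ^ 2 * W with hS
    have hSnn : 0 ≤ S := by positivity
    have h1 : α * S ≤ α * ((G *ᵥ w) ⬝ᵥ (G2 *ᵥ w)) :=
      mul_le_mul_of_nonneg_left hdot2 hα0.le
    have h3 : Λ / 2 * (α ^ 2 * S) ≤ α / 2 * S := by
      have h4 : α * Λ * (α * S) ≤ 1 * (α * S) :=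
        mul_le_mul_of_nonneg_right hαΛ (by positivity)
      have e1 : Λ / 2 * (α ^ 2 * S) = α * Λ * (α * S) / 2 := by ring
      have e2 : α / 2 * S = 1 * (α * S) / 2 := by ring
      rw [e1, e2]
      linarith
    linarith [hdesc, h1, h3]
  have hrhs : (α * ε ^ 2 * C ^ 2 / (2 * W)) * ((G *ᵥ w) ⬝ᵥ (G *ᵥ w)) < α / 2 * (σR ^ 2 * W) := by
    have hGwsq : (G *ᵥ w) ⬝ᵥ (G *ᵥ w) ≤ σ₁ ^ 2 * W := hd1 ▸ hsum1
    have hGwnn : 0 ≤ (G *ᵥ w) ⬝ᵥ (G *ᵥ w) := by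
      rw [hd1]; positivity
    have h1 : (α * ε ^ 2 * C ^ 2 / (2 * W)) * ((G *ᵥ w) ⬝ᵥ (G *ᵥ w))
        ≤ (α * ε ^ 2 * C ^ 2 / (2 * W)) * (σ₁ ^ 2 * W) := by
      apply mul_le_mul_of_nonneg_left hGwsq
      positivity
    have h2 : (α * ε ^ 2 * C ^ 2 / (2 * W)) * (σ₁ ^ 2 * W) = α / 2 * (ε ^ 2 * (C * σ₁) ^ 2) := by
      field_simp
    have h3 : ε ^ 2 * (C * σ₁) ^ 2 < W * σR ^ 2 := by
      have hCσ1pos : 0 < C * σ₁ := by positivity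
      have ha : ε ^ 2 * (C * σ₁) ^ 2 < W * (C * σ₁) ^ 2 :=
        mul_lt_mul_of_pos_right hε2 (by positivity)
      have hb : (C * σ₁) ^ 2 < σR ^ 2 := by
        apply pow_lt_pow_left₀ hCσ hCσ1pos.le
        norm_num
      have hc : W * (C * σ₁) ^ 2 < W * σR ^ 2 := mul_lt_mul_of_pos_left hb hWpos
      linarith
    calc (α * ε ^ 2 * C ^ 2 / (2 * W)) * ((G *ᵥ w) ⬝ᵥ (G *ᵥ w))
        ≤ α / 2 * (ε ^ 2 * (C * σ₁) ^ 2) := by rw [← h2]; exact h1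
      _ < α / 2 * (σR ^ 2 * W) := by
          apply mul_lt_mul_of_pos_left _ (by positivity)
          linarith
  have hGwsum : (∑ j, G.mulVec w j ^ 2) = (G *ᵥ w) ⬝ᵥ (G *ᵥ w) := by
    simp [dotProduct, pow_two]
  rw [hGwsum]
  calc (α * ε ^ 2 * C ^ 2 / (2 * W)) * ((G *ᵥ w) ⬝ᵥ (G *ᵥ w)) < α / 2 * (σR ^ 2 * W) := hrhs
    _ ≤ L0 θt - L0 θnext := key
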